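/- There exists a closed subset F of Z (namely F = {Q ∈ Z : ∀n, n < q_n < n+1}) such that the characteristic function 1_F : Z → {0,1} is not first return recoverable: for every dense sequence D = (x_p) of Z there exists x ∈ Z such that the sequence (1_F(s'_n[x,D]))_n does not converge to 1_F(x). -/

import Mathlib

open Filter Topology Set Classical

noncomputable section
open scoped Classical

/-- A set is Fσ if it is a countable union of closed sets. -/
def IsFsigma {X : Type*} [TopologicalSpace X] (s : Set X) : Prop :=
  ∃ F : ℕ → Set X, (∀ n, IsClosed (F n)) ∧ s = ⋃ n, F n

/-- A function is Baire class one if the preimage of every open set is Fσ. -/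
def BaireClassOneFn {X Y : Type*} [TopologicalSpace X] [TopologicalSpace Y] (f : X → Y) : Prop :=
  ∀ U : Set Y, IsOpen U → IsFsigma (f ⁻¹' U)

/-- A countable basis `(W m)` is good if for every open `U` and `x ∈ U` there is `m₀`
such that for all `m ≥ m₀`, `x ∈ W m` implies `W m ⊆ U`. -/
def IsGoodBasis {X : Type*} [TopologicalSpace X] (W : ℕ → Set X) : Prop :=
  TopologicalSpace.IsTopologicalBasis (Set.range W) ∧
  ∀ U : Set X, IsOpen U → ∀ x ∈ U, ∃ m₀, ∀ m ≥ m₀, x ∈ W m → W m ⊆ U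

/-- The path to `x` based on the dense sequence `D`, relative to the good basis `W`. -/
noncomputable def pathSeq {X : Type*} (W : ℕ → Set X) (D : ℕ → X) (x : X) : ℕ → X
  | 0 => D 0
  | n + 1 =>
    if x = pathSeq W D x n then pathSeq W D x n
    else D (sInf {p | ∃ m, x ∈ W m ∧ D p ∈ W m ∧ ∀ k, k ≤ n → pathSeq W D x k ∉ W m})
  termination_by n => n
  decreasing_by all_goals omega

/-- `f` is recoverable with respect to `D` (and the good basis `W`). -/
def RecoverableWith {X Y : Type*} [TopologicalSpace Y] (W : ℕ → Set X) (D : ℕ → X)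
    (f : X → Y) : Prop :=
  ∀ x : X, Tendsto (fun n => f (pathSeq W D x n)) atTop (𝓝 (f x))

/-- The (first return) route to `x` based on the dense sequence `D`, relative to a
distance function `d`. -/
noncomputable def routeSeq {X : Type*} (d : X → X → ℝ) (D : ℕ → X) (x : X) : ℕ → X
  | 0 => D 0
  | n + 1 =>
    if x = routeSeq d D x n then routeSeq d D x n
    else D (sInf {p | d x (D p) < d x (routeSeq d D x n)})

/-- The space `Z` of strictly increasing sequences of nonnegative rationals tending to `+∞`. -/
def Zsp : Type :=
  {q : ℕ → ℚ // (∀ n, 0 ≤ q n) ∧ StrictMono q ∧ Tendsto q atTop atTop}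

/-- The distance on `Z` : `d(Q,Q') = 2 ^ (- min (q_n, q'_n))` where `n` is the least index
where `Q` and `Q'` differ, and `0` if `Q = Q'`. -/
noncomputable def dZ (Q Q' : Zsp) : ℝ :=
  if Q = Q' then 0
  else (2 : ℝ) ^
    (-((min (Q.1 (sInf {n | Q.1 n ≠ Q'.1 n})) (Q'.1 (sInf {n | Q.1 n ≠ Q'.1 n})) : ℚ) : ℝ))

/-- The set `F = {Q ∈ Z | ∀ n, n < q_n < n+1}`. -/
def Fz : Set Zsp := {Q | ∀ n : ℕ, (n : ℚ) < Q.1 n ∧ Q.1 n < (n : ℚ) + 1}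

namespace CharFzAux

lemma rpow_lt_rpow_q {a b : ℚ} : ((2:ℝ) ^ (-(a:ℝ)) < (2:ℝ) ^ (-(b:ℝ))) ↔ b < a := by
  rw [Real.rpow_lt_rpow_left_iff one_lt_two, neg_lt_neg_iff, Rat.cast_lt]

lemma rpow_pos_q (a : ℚ) : 0 < (2:ℝ) ^ (-(a:ℝ)) := Real.rpow_pos_of_pos two_pos _

lemma zsp_ext {Q Q' : Zsp} (h : ∀ n, Q.1 n = Q'.1 n) : Q = Q' := Subtype.ext (funext h)

lemma diff_nonempty {Q Q' : Zsp} (h : Q ≠ Q') : {n | Q.1 n ≠ Q'.1 n}.Nonempty := by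
  by_contra hc
  exact h (zsp_ext fun n => by
    by_contra hn
    exact hc ⟨n, hn⟩)

lemma dZ_self (Q : Zsp) : dZ Q Q = 0 := by simp [dZ]

lemma dZ_eq_of_agree {Q Q' : Zsp} (k : ℕ) (hlt : ∀ j < k, Q.1 j = Q'.1 j)
    (hne : Q.1 k ≠ Q'.1 k) :
    dZ Q Q' = (2:ℝ) ^ (-((min (Q.1 k) (Q'.1 k) : ℚ) : ℝ)) := by
  have hQQ : Q ≠ Q' := fun h => hne (by rw [h])
  have hs : sInf {n | Q.1 n ≠ Q'.1 n} = k := by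
    refine le_antisymm (Nat.sInf_le hne) ?_
    by_contra h'
    push_neg at h'
    exact (Nat.sInf_mem (diff_nonempty hQQ)) (hlt _ h')
  simp only [dZ, if_neg hQQ, hs]

/-- climb-form ball characterization -/
lemma dZ_lt_iff_climb (z y : Zsp) (k : ℕ) (c : ℚ)
    (h1 : ∀ j < k, z.1 j ≤ c) (h2 : c < z.1 k) :
    dZ z y < (2:ℝ) ^ (-(c:ℝ)) ↔ (∀ j < k, y.1 j = z.1 j) ∧ c < y.1 k := by
  by_cases hzy : z = y
  · subst hzy
    simp [dZ_self, rpow_pos_q c, h2]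
  · have hne := diff_nonempty hzy
    set j0 := sInf {n | z.1 n ≠ y.1 n} with hj0def
    have hj0 : z.1 j0 ≠ y.1 j0 := Nat.sInf_mem hne
    have hagree : ∀ i < j0, z.1 i = y.1 i := fun i hi => by
      by_contra hc; exact absurd (Nat.sInf_le hc) (not_le.mpr hi)
    simp only [dZ, if_neg hzy, ← hj0def]
    rw [rpow_lt_rpow_q]
    constructor
    · intro hmin
      have hz : c < z.1 j0 := lt_of_lt_of_le hmin (min_le_left _ _)
      have hy : c < y.1 j0 := lt_of_lt_of_le hmin (min_le_right _ _)
      have hkj : k ≤ j0 := by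
        by_contra hc
        push_neg at hc
        exact absurd hz (not_lt.mpr (h1 _ hc))
      refine ⟨fun j hj => (hagree j (lt_of_lt_of_le hj hkj)).symm, ?_⟩
      rcases eq_or_lt_of_le hkj with h | h
      · rw [h]; exact hy
      · rw [← hagree k h]; exact h2
    · rintro ⟨hag, hyk⟩
      have hkj : k ≤ j0 := by
        by_contra hc
        push_neg at hc
        exact hj0 (hag j0 hc).symm
      rcases eq_or_lt_of_le hkj with h | h
      · rw [← h]
        exact lt_min h2 hyk
      · exact lt_min (h2.trans (z.2.2.1 h)) (hyk.trans (y.2.2.1 h))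

/-- cross-form ball characterization -/
lemma dZ_lt_iff_cross (z y : Zsp) (k : ℕ) :
    dZ z y < (2:ℝ) ^ (-(z.1 k : ℝ)) ↔ ∀ j < k + 1, y.1 j = z.1 j := by
  by_cases hzy : z = y
  · subst hzy
    simp [dZ_self, rpow_pos_q]
  · have hne := diff_nonempty hzy
    set j0 := sInf {n | z.1 n ≠ y.1 n} with hj0def
    have hj0 : z.1 j0 ≠ y.1 j0 := Nat.sInf_mem hne
    have hagree : ∀ i < j0, z.1 i = y.1 i := fun i hi => by
      by_contra hc; exact absurd (Nat.sInf_le hc) (not_le.mpr hi)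
    simp only [dZ, if_neg hzy, ← hj0def]
    rw [rpow_lt_rpow_q]
    constructor
    · intro hmin
      have hz : z.1 k < z.1 j0 := lt_of_lt_of_le hmin (min_le_left _ _)
      have hkj : k < j0 := z.2.2.1.lt_iff_lt.mp hz
      exact fun j hj => (hagree j (lt_of_lt_of_le hj hkj)).symm
    · intro hag
      have hkj : k < j0 := by
        by_contra hc
        push_neg at hc
        exact hj0 (hag j0 (Nat.lt_succ_of_le hc)).symm
      refine lt_min (z.2.2.1 hkj) ?_
      calc z.1 k = y.1 k := (hag k (Nat.lt_succ_self k)).symm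
        _ < y.1 j0 := y.2.2.1 hkj


variable (D : ℕ → Zsp)

def pstarSet (f : ℕ → ℚ) (k : ℕ) : Set ℕ :=
  {p | (∀ j < k, (D p).1 j = f j) ∧ (k:ℚ) + 1 ≤ (D p).1 k}

noncomputable def pstar (f : ℕ → ℚ) (k : ℕ) : ℕ := sInf (pstarSet D f k)

noncomputable def tbar (f : ℕ → ℚ) (k : ℕ) : ℚ :=
  (Finset.range (pstar D f k)).fold max (k:ℚ)
    (fun p => if ((∀ j < k, (D p).1 j = f j) ∧ (D p).1 k < (k:ℚ)+1) then (D p).1 k else (k:ℚ))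

noncomputable def newc (f : ℕ → ℚ) (k : ℕ) : ℚ :=
  if (tbar D f k + ((k:ℚ)+1))/2 = (D k).1 k
  then (tbar D f k + (tbar D f k + ((k:ℚ)+1))/2)/2
  else (tbar D f k + ((k:ℚ)+1))/2

noncomputable def xc : ℕ → ℚ
  | k => newc D (fun j => if h : j < k then xc j else 0) k
termination_by k => k
decreasing_by exact h

lemma pstarSet_congr {f g : ℕ → ℚ} {k : ℕ} (h : ∀ j < k, f j = g j) :
    pstarSet D f k = pstarSet D g k := by
  ext p
  constructor <;> rintro ⟨h1, h2⟩
  · exact ⟨fun j hj => (h1 j hj).trans (h j hj), h2⟩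
  · exact ⟨fun j hj => (h1 j hj).trans (h j hj).symm, h2⟩

lemma tbar_congr {f g : ℕ → ℚ} {k : ℕ} (h : ∀ j < k, f j = g j) :
    tbar D f k = tbar D g k := by
  unfold tbar pstar
  rw [pstarSet_congr D h]
  apply Finset.fold_congr
  intro p _
  have hiff : (∀ j < k, (D p).1 j = f j) ↔ (∀ j < k, (D p).1 j = g j) :=
    forall₂_congr fun j hj => by rw [h j hj]
  by_cases hc : (∀ j < k, (D p).1 j = g j) ∧ (D p).1 k < (k:ℚ)+1
  · rw [if_pos hc, if_pos ⟨hiff.mpr hc.1, hc.2⟩]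
  · rw [if_neg hc, if_neg (fun hx => hc ⟨hiff.mp hx.1, hx.2⟩)]

lemma newc_congr {f g : ℕ → ℚ} {k : ℕ} (h : ∀ j < k, f j = g j) :
    newc D f k = newc D g k := by
  unfold newc
  rw [tbar_congr D h]

lemma xc_def (k : ℕ) : xc D k = newc D (xc D) k := by
  rw [xc]
  exact newc_congr D (fun j hj => by rw [dif_pos hj])

lemma le_tbar_base (f : ℕ → ℚ) (k : ℕ) : (k:ℚ) ≤ tbar D f k :=
  (Finset.le_fold_max _).mpr (Or.inl le_rfl)

lemma tbar_lt (f : ℕ → ℚ) (k : ℕ) : tbar D f k < (k:ℚ) + 1 := by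
  apply (Finset.fold_max_lt _).mpr
  refine ⟨by linarith, ?_⟩
  intro p _
  split
  · next hc => exact hc.2
  · linarith

lemma coord_le_tbar {f : ℕ → ℚ} {k p : ℕ} (hp : p < pstar D f k)
    (h1 : ∀ j < k, (D p).1 j = f j) (h2 : (D p).1 k < (k:ℚ)+1) :
    (D p).1 k ≤ tbar D f k := by
  apply (Finset.le_fold_max _).mpr
  exact Or.inr ⟨p, Finset.mem_range.mpr hp, by rw [if_pos ⟨h1, h2⟩]⟩

lemma tbar_lt_xc (k : ℕ) : tbar D (xc D) k < xc D k := by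
  rw [xc_def, newc]
  have h := tbar_lt D (xc D) k
  split <;> linarith

lemma xc_lt (k : ℕ) : xc D k < (k:ℚ) + 1 := by
  rw [xc_def, newc]
  have h := tbar_lt D (xc D) k
  have h2 := le_tbar_base D (xc D) k
  split <;> linarith

lemma lt_xc (k : ℕ) : (k:ℚ) < xc D k :=
  lt_of_le_of_lt (le_tbar_base D (xc D) k) (tbar_lt_xc D k)

lemma xc_ne (k : ℕ) : xc D k ≠ (D k).1 k := by
  rw [xc_def, newc]
  have h := tbar_lt D (xc D) k
  split
  · next hc => intro he; rw [← hc] at he; linarith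
  · next hc => exact hc

noncomputable def xz : Zsp := by
  refine ⟨xc D, fun n => ?_, strictMono_nat_of_lt_succ fun n => ?_, ?_⟩
  · exact le_of_lt (lt_of_le_of_lt (Nat.cast_nonneg n) (lt_xc D n))
  · have h1 := xc_lt D n
    have h2 := lt_xc D (n+1)
    push_cast at h2
    linarith
  · exact tendsto_atTop_mono (fun n => (lt_xc D n).le) tendsto_natCast_atTop_atTop

lemma xz_fst : (xz D).1 = xc D := rfl

lemma xz_mem_Fz : xz D ∈ Fz := fun n => ⟨lt_xc D n, xc_lt D n⟩

lemma xz_ne_D : ∀ p, xz D ≠ D p := fun p h => xc_ne D p (by rw [← h]; rfl)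


def entSet (k : ℕ) : Set ℕ := {p | ∀ j < k, (D p).1 j = xc D j}

noncomputable def ent (k : ℕ) : ℕ := sInf (entSet D k)

section Density

variable [MetricSpace Zsp] (hm : ∀ Q Q' : Zsp, dist Q Q' = dZ Q Q') (hD : DenseRange D)

/-- auxiliary witness point: agrees with xc below k and has k-th coordinate k+3/2 -/
noncomputable def wit (k : ℕ) : Zsp := by
  refine ⟨fun j => if j < k then xc D j else (j:ℚ) + 3/2, fun n => ?_,
    strictMono_nat_of_lt_succ fun n => ?_, ?_⟩
  · dsimp only
    split
    · exact le_of_lt (lt_of_le_of_lt (Nat.cast_nonneg n) (lt_xc D n))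
    · positivity
  · try dsimp only
    by_cases h1 : n + 1 < k
    · rw [if_pos (by omega), if_pos h1]
      have ha := xc_lt D n
      have hb := lt_xc D (n+1)
      push_cast at hb
      linarith
    · rw [if_neg h1]
      split
      · next h2 =>
        have ha := xc_lt D n
        have : (n:ℚ) + 1 ≤ (n+1:ℕ) := by push_cast; linarith
        push_cast
        linarith
      · push_cast; linarith
  · apply tendsto_atTop_mono' _ _ tendsto_natCast_atTop_atTop
    filter_upwards [eventually_ge_atTop k] with j hj
    rw [if_neg (by omega)]
    linarith

lemma wit_agree (k : ℕ) : ∀ j < k, (wit D k).1 j = xc D j := fun j hj => if_pos hj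

lemma wit_coord (k : ℕ) : (wit D k).1 k = (k:ℚ) + 3/2 := by
  show (if k < k then xc D k else (k:ℚ) + 3/2) = (k:ℚ) + 3/2
  rw [if_neg (lt_irrefl k)]

include hm hD in
lemma pstarSet_nonempty (k : ℕ) : (pstarSet D (xc D) k).Nonempty := by
  obtain ⟨p, hp⟩ := Metric.denseRange_iff.mp hD (wit D k) ((2:ℝ) ^ (-((wit D k).1 k : ℝ)))
    (rpow_pos_q _)
  rw [hm] at hp
  have hag := (dZ_lt_iff_cross (wit D k) (D p) k).mp hp
  refine ⟨p, fun j hj => ?_, ?_⟩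
  · rw [hag j (by omega), wit_agree D k j hj]
  · rw [hag k (Nat.lt_succ_self k), wit_coord D k]
    linarith

include hm hD in
lemma entSet_nonempty (k : ℕ) : (entSet D k).Nonempty := by
  obtain ⟨p, hp⟩ := pstarSet_nonempty D hm hD k
  exact ⟨p, hp.1⟩


/-- abbreviation for the route based on dZ to the constructed point -/
noncomputable def R (n : ℕ) : Zsp := routeSeq dZ D (xz D) n

lemma route_zero : R D 0 = D 0 := rfl

lemma route_succ (n p : ℕ) (h : R D n = D p) :
    R D (n+1) = D (sInf {q | dZ (xz D) (D q) < dZ (xz D) (D p)}) := by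
  show routeSeq dZ D (xz D) (n+1) = _
  rw [routeSeq]
  rw [show routeSeq dZ D (xz D) n = D p from h]
  rw [if_neg (xz_ne_D D p)]

lemma climb_set (k : ℕ) (u : Zsp) (hu1 : ∀ j < k, u.1 j = xc D j)
    (hu2 : u.1 k < xc D k) :
    {q | dZ (xz D) (D q) < dZ (xz D) u} =
      {q | (∀ j < k, (D q).1 j = xc D j) ∧ u.1 k < (D q).1 k} := by
  have hformula : dZ (xz D) u = (2:ℝ) ^ (-(u.1 k : ℝ)) := by
    rw [dZ_eq_of_agree k (fun j hj => (hu1 j hj).symm) (ne_of_gt hu2), xz_fst]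
    rw [min_eq_right hu2.le]
  have h1 : ∀ j < k, (xz D).1 j ≤ u.1 k := by
    intro j hj
    rw [xz_fst, ← hu1 j hj]
    exact (u.2.2.1 hj).le
  ext q
  simp only [Set.mem_setOf_eq, hformula]
  rw [dZ_lt_iff_climb (xz D) (D q) k (u.1 k) h1 hu2]
  rfl

lemma cross_set (k : ℕ) (u : Zsp) (hu1 : ∀ j < k, u.1 j = xc D j)
    (hu2 : xc D k < u.1 k) :
    {q | dZ (xz D) (D q) < dZ (xz D) u} = entSet D (k+1) := by
  have hformula : dZ (xz D) u = (2:ℝ) ^ (-(xc D k : ℝ)) := by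
    rw [dZ_eq_of_agree k (fun j hj => (hu1 j hj).symm) (ne_of_lt hu2), xz_fst]
    rw [min_eq_left hu2.le]
  ext q
  simp only [Set.mem_setOf_eq, hformula]
  have := dZ_lt_iff_cross (xz D) (D q) k
  rw [xz_fst] at this
  rw [this]
  rfl

include hm hD in
lemma reach_pstar (k : ℕ) : ∀ c : ℕ, ∀ r n, R D n = D r →
    (∀ j < k, (D r).1 j = xc D j) → (D r).1 k < xc D k →
    (((Finset.range (pstar D (xc D) k)).filter
      (fun p => (∀ j < k, (D p).1 j = xc D j) ∧ (D r).1 k < (D p).1 k)).card < c) →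
    ∃ m, n ≤ m ∧ R D m = D (pstar D (xc D) k) := by
  intro c
  induction c with
  | zero => intro r n _ _ _ hcard; omega
  | succ c ih =>
    intro r n hn hag hlt hcard
    have hPmem : pstar D (xc D) k ∈ pstarSet D (xc D) k :=
      Nat.sInf_mem (pstarSet_nonempty D hm hD k)
    set P := pstar D (xc D) k with hPdef
    have hstep : R D (n+1) = D (sInf {q | (∀ j < k, (D q).1 j = xc D j) ∧
        (D r).1 k < (D q).1 k}) := by
      rw [route_succ D n r hn, climb_set D k (D r) hag hlt]
    have hPin : P ∈ {q | (∀ j < k, (D q).1 j = xc D j) ∧ (D r).1 k < (D q).1 k} := by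
      refine ⟨hPmem.1, ?_⟩
      have h1 := xc_lt D k
      have h2 := hPmem.2
      linarith
    set r' := sInf {q | (∀ j < k, (D q).1 j = xc D j) ∧ (D r).1 k < (D q).1 k} with hr'def
    have hr'mem : r' ∈ {q | (∀ j < k, (D q).1 j = xc D j) ∧ (D r).1 k < (D q).1 k} :=
      Nat.sInf_mem ⟨P, hPin⟩
    have hr'P : r' ≤ P := Nat.sInf_le hPin
    rcases eq_or_lt_of_le hr'P with heq | hlt'
    · exact ⟨n+1, by omega, by rw [hstep, heq]⟩
    · -- r' < P : continue climbing
      have hcoord : (D r').1 k < (k:ℚ) + 1 := by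
        by_contra hc
        push_neg at hc
        exact absurd (Nat.sInf_le (⟨hr'mem.1, hc⟩ : r' ∈ pstarSet D (xc D) k))
          (not_le.mpr hlt')
      have hcoord2 : (D r').1 k < xc D k :=
        lt_of_le_of_lt (coord_le_tbar D hlt' hr'mem.1 hcoord) (tbar_lt_xc D k)
      have hss : (Finset.range P).filter
          (fun p => (∀ j < k, (D p).1 j = xc D j) ∧ (D r').1 k < (D p).1 k) ⊂
          (Finset.range P).filter
          (fun p => (∀ j < k, (D p).1 j = xc D j) ∧ (D r).1 k < (D p).1 k) := by
        refine Finset.ssubset_iff_of_subset ?_ |>.mpr ?_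
        · intro p hp
          rw [Finset.mem_filter] at hp ⊢
          exact ⟨hp.1, hp.2.1, lt_trans hr'mem.2 hp.2.2⟩
        · refine ⟨r', ?_, ?_⟩
          · rw [Finset.mem_filter]
            exact ⟨Finset.mem_range.mpr hlt', hr'mem.1, hr'mem.2⟩
          · rw [Finset.mem_filter]
            rintro ⟨-, -, hx⟩
            exact lt_irrefl _ hx
      have hcc := Finset.card_lt_card hss
      obtain ⟨mm, hmm1, hmm2⟩ := ih r' (n+1) hstep hr'mem.1 hcoord2 (by omega)
      exact ⟨mm, by omega, hmm2⟩

include hm hD in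
lemma level (k n : ℕ) (hn : R D n = D (ent D k)) :
    ∃ m, n ≤ m ∧ R D m ∉ Fz ∧ R D (m+1) = D (ent D (k+1)) := by
  have hPmem : pstar D (xc D) k ∈ pstarSet D (xc D) k :=
    Nat.sInf_mem (pstarSet_nonempty D hm hD k)
  set P := pstar D (xc D) k with hPdef
  have hPnotF : D P ∉ Fz := by
    intro hF
    have := (hF k).2
    have := hPmem.2
    linarith
  have hcross : ∀ m, R D m = D P → R D (m+1) = D (ent D (k+1)) := by
    intro m hmm
    rw [route_succ D m P hmm, cross_set D k (D P) hPmem.1 ?_]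
    · rfl
    · have h1 := xc_lt D k
      have h2 := hPmem.2
      linarith
  have hentmem : ent D k ∈ entSet D k := Nat.sInf_mem (entSet_nonempty D hm hD k)
  have hent_le : ent D k ≤ P := Nat.sInf_le hPmem.1
  rcases eq_or_lt_of_le hent_le with heq | hlt
  · refine ⟨n, le_rfl, ?_, ?_⟩
    · rw [hn, heq]; exact hPnotF
    · exact hcross n (by rw [hn, heq])
  · -- ent k < P
    have hcoord : (D (ent D k)).1 k < (k:ℚ) + 1 := by
      by_contra hc
      push_neg at hc
      exact absurd (Nat.sInf_le (⟨hentmem, hc⟩ : ent D k ∈ pstarSet D (xc D) k))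
        (not_le.mpr hlt)
    have hcoord2 : (D (ent D k)).1 k < xc D k :=
      lt_of_le_of_lt (coord_le_tbar D hlt hentmem hcoord) (tbar_lt_xc D k)
    obtain ⟨m, hm1, hm2⟩ := reach_pstar D hm hD k
      (((Finset.range P).filter
        (fun p => (∀ j < k, (D p).1 j = xc D j) ∧ (D (ent D k)).1 k < (D p).1 k)).card + 1)
      (ent D k) n hn hentmem hcoord2 (Nat.lt_succ_self _)
    exact ⟨m, hm1, by rw [hm2]; exact hPnotF, hcross m hm2⟩

include hm hD in
lemma entry (k : ℕ) : ∃ n, k ≤ n ∧ R D n = D (ent D k) := by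
  induction k with
  | zero =>
    refine ⟨0, le_rfl, ?_⟩
    have : ent D 0 = 0 := Nat.le_zero.mp (Nat.sInf_le (fun j hj => absurd hj (Nat.not_lt_zero j)))
    rw [route_zero, this]
  | succ k ih =>
    obtain ⟨n, hk, hn⟩ := ih
    obtain ⟨m, hm1, _, hm3⟩ := level D hm hD k n hn
    exact ⟨m+1, by omega, hm3⟩

include hm hD in
lemma freq_notF (N : ℕ) : ∃ m, N ≤ m ∧ R D m ∉ Fz := by
  obtain ⟨n, hn, hR⟩ := entry D hm hD N
  obtain ⟨m, hm1, hm2, -⟩ := level D hm hD N n hR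
  exact ⟨m, by omega, hm2⟩

end Density

end CharFzAux

/-- `F` is a closed subset of `Z` whose characteristic function is not first return
recoverable : for every dense sequence `D` of `Z` there is a point `x` such that
`(1_F(s'_n[x,D]))` does not converge to `1_F(x)`. -/
theorem charFn_Fz_not_firstReturnRecoverable [m : MetricSpace Zsp]
    (hm : ∀ Q Q' : Zsp, dist Q Q' = dZ Q Q') :
    IsClosed Fz ∧
    ∀ D : ℕ → Zsp, DenseRange D → ∃ x : Zsp,
      ¬ Tendsto (fun n => Fz.indicator (fun _ => (1 : ℝ)) (routeSeq dist D x n)) atTop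
          (𝓝 (Fz.indicator (fun _ => (1 : ℝ)) x)) := by
  constructor
  · -- Fz is closed
    rw [← isOpen_compl_iff, Metric.isOpen_iff]
    intro Q hQ
    have hQ' : ¬ ∀ n : ℕ, (n : ℚ) < Q.1 n ∧ Q.1 n < (n : ℚ) + 1 := hQ
    push_neg at hQ'
    obtain ⟨n, hn⟩ := hQ'
    refine ⟨(2:ℝ) ^ (-(Q.1 n : ℝ)), CharFzAux.rpow_pos_q _, ?_⟩
    intro Q' hQ'ball
    rw [Metric.mem_ball, hm] at hQ'ball
    intro hF
    have heq : Q'.1 n = Q.1 n := by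
      by_cases hqq : Q' = Q
      · rw [hqq]
      · rw [dZ] at hQ'ball
        rw [if_neg hqq] at hQ'ball
        rw [CharFzAux.rpow_lt_rpow_q] at hQ'ball
        have hlt : Q.1 n < Q.1 (sInf {k | Q'.1 k ≠ Q.1 k}) :=
          lt_of_lt_of_le hQ'ball (min_le_right _ _)
        have hn' : n < sInf {k | Q'.1 k ≠ Q.1 k} := Q.2.2.1.lt_iff_lt.mp hlt
        by_contra hne
        exact absurd (Nat.sInf_le hne) (not_le.mpr hn')
    have := hF n
    rw [heq] at this
    exact absurd this.2 (not_lt.mpr (hn this.1))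
  · -- not recoverable
    intro D hD
    refine ⟨CharFzAux.xz D, ?_⟩
    have hdd : (dist : Zsp → Zsp → ℝ) = dZ := funext fun a => funext fun b => hm a b
    rw [hdd]
    intro hT
    rw [Set.indicator_of_mem (CharFzAux.xz_mem_Fz D)] at hT
    have h2 : ∀ᶠ n in atTop,
        (1/2 : ℝ) < Fz.indicator (fun _ => (1:ℝ)) (routeSeq dZ D (CharFzAux.xz D) n) :=
      hT.eventually (eventually_gt_nhds (by norm_num))
    rw [eventually_atTop] at h2
    obtain ⟨N, hN⟩ := h2
    obtain ⟨mm, hmm1, hmm2⟩ := CharFzAux.freq_notF D hm hD N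
    have := hN mm hmm1
    rw [show routeSeq dZ D (CharFzAux.xz D) mm = CharFzAux.R D mm from rfl] at this
    rw [Set.indicator_of_notMem hmm2] at this
    norm_num at this
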